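/- Let Z[1],...,Z[n],Z[n+1] be exchangeable real-valued random variables. For α ∈ [1/(n+1), 1), let Q_{1-α} be the ⌈(1-α)(n+1)⌉-th smallest value of the multiset {Z[1],...,Z[n], +∞}. Then P(Z[n+1] ≤ Q_{1-α}({Z[i]}_{i=1}^n)) ≥ 1 - α. -/

import Mathlib

open MeasureTheory

/-- The `k`-th smallest element (1-indexed) of a multiset of extended reals. -/
noncomputable def kthSmallestE (s : Multiset EReal) (k : ℕ) : EReal :=
  (s.sort (· ≤ ·)).getD (k - 1) 0

/-- The `(1-α)`-empirical quantile of `n` real values: the `⌈(1-α)(n+1)⌉`-th smallest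
value of the multiset obtained by augmenting them with `+∞` in the extended reals. -/
noncomputable def empQuantile (n : ℕ) (a : Fin n → ℝ) (α : ℝ) : EReal :=
  kthSmallestE ((⊤ : EReal) ::ₘ Multiset.map (fun i => (a i : EReal)) Finset.univ.val)
    ⌈(1 - α) * (n + 1)⌉₊

open Finset in
open scoped Classical in
/-- Order-statistic characterization for sorted lists. -/
private lemma sorted_le_kth_iff (l : List EReal) (hl : l.Pairwise (· ≤ ·)) (k : ℕ) (hk1 : 1 ≤ k)
    (hk2 : k ≤ l.length) (x : EReal) :
    x ≤ l.getD (k-1) 0 ↔ (l.filter (fun a => a < x)).length ≤ k - 1 := by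
  have hlt : k - 1 < l.length := by omega
  rw [List.getD_eq_getElem l 0 hlt]
  constructor
  · intro h
    have hsplit : l = l.take (k-1) ++ l.drop (k-1) := (List.take_append_drop _ l).symm
    have hdrop : (l.drop (k-1)).filter (fun a => a < x) = [] := by
      rw [List.filter_eq_nil_iff]
      intro a ha
      obtain ⟨j, hj, rfl⟩ := List.mem_iff_getElem.mp ha
      have hjl : k - 1 + j < l.length := by
        have := hj; simp [List.length_drop] at this; omega
      simp only [List.getElem_drop]
      have : l[k-1] ≤ l[k-1+j] := by
        rcases Nat.eq_or_lt_of_le (Nat.le_add_right (k-1) j) with h' | h'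
        · exact le_of_eq (by congr 1)
        · exact (List.pairwise_iff_getElem.mp hl) _ _ _ _ h'
      simp only [decide_eq_true_eq]
      exact not_lt.mpr (le_trans h this)
    conv_lhs => rw [hsplit]
    rw [List.filter_append, hdrop, List.length_append, List.length_nil]
    have h1 : (List.filter (fun a => decide (a < x)) (l.take (k-1))).length ≤ (l.take (k-1)).length :=
      List.length_filter_le _ _
    have h2 : (l.take (k-1)).length ≤ k - 1 := by simp [List.length_take]
    omega
  · intro h
    by_contra hx
    push_neg at hx
    have htake : (l.take k).filter (fun a => a < x) = l.take k := by
      rw [List.filter_eq_self]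
      intro a ha
      obtain ⟨j, hj, rfl⟩ := List.mem_iff_getElem.mp ha
      rw [List.getElem_take] at *
      have hjk : j < k := by simp [List.length_take] at hj; omega
      have : l[j] ≤ l[k-1] := by
        rcases Nat.lt_or_ge j (k-1) with h' | h'
        · exact (List.pairwise_iff_getElem.mp hl) _ _ _ _ h'
        · have : j = k-1 := by omega
          exact le_of_eq (by congr 1)
      simp only [decide_eq_true_eq]
      exact lt_of_le_of_lt this hx
    have hsub : ((l.take k).filter (fun a => a < x)).length ≤ (l.filter (fun a => a < x)).length :=
      ((l.take_sublist k).filter _).length_le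
    rw [htake] at hsub
    have : (l.take k).length = k := by simp [List.length_take]; omega
    omega

open Finset in
open scoped Classical in
/-- Quantile characterization. -/
private lemma le_empQuantile_iff (n k : ℕ) (hk1 : 1 ≤ k) (hkN : k ≤ n + 1)
    (z : Fin n → ℝ) (x : ℝ) :
    ((x : EReal) ≤ kthSmallestE
        ((⊤ : EReal) ::ₘ Multiset.map (fun i => (z i : EReal)) Finset.univ.val) k)
      ↔ (univ.filter (fun i => z i < x)).card ≤ k - 1 := by
  set s : Multiset EReal := (⊤ : EReal) ::ₘ Multiset.map (fun i => (z i : EReal)) Finset.univ.val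
    with hs
  have hcard : Multiset.card s = n + 1 := by simp [hs]
  have hlen : (s.sort (· ≤ ·)).length = n + 1 := by rw [Multiset.length_sort, hcard]
  have hsorted : (s.sort (· ≤ ·)).Pairwise (· ≤ ·) := Multiset.pairwise_sort s _
  have key := sorted_le_kth_iff (s.sort (· ≤ ·)) hsorted k hk1 (by omega) (x : EReal)
  rw [kthSmallestE, key]
  have h1 : ((s.sort (· ≤ ·)).filter (fun a => a < (x:EReal))).length
      = Multiset.card (s.filter (fun a => a < (x:EReal))) := by
    rw [← Multiset.coe_card, ← Multiset.filter_coe, Multiset.sort_eq]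
  rw [h1, hs]
  rw [Multiset.filter_cons]
  have hne : ¬ ((⊤:EReal) < (x:EReal)) := not_top_lt
  rw [if_neg hne]
  simp only [zero_add]
  rw [Multiset.filter_map, Multiset.card_map]
  have : (Multiset.filter ((fun a => a < (x:EReal)) ∘ fun i => ((z i : ℝ) : EReal))
        Finset.univ.val)
      = (univ.filter (fun i => z i < x)).val := by
    rw [Finset.filter_val]
    apply Multiset.filter_congr
    intro i _
    simp [Function.comp, EReal.coe_lt_coe_iff]
  rw [this, Finset.card_val]

open Finset in
open scoped Classical in
/-- At least `k` indices have strict rank at most `k - 1`. -/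
private lemma rank_count_lemma (N k : ℕ) (hk : k ≤ N) (z : Fin N → ℝ) :
    k ≤ (univ.filter (fun j => (univ.filter (fun i => z i < z j)).card ≤ k - 1)).card := by
  rcases Nat.eq_zero_or_pos k with rfl | hk1
  · exact Nat.zero_le _
  set T := univ.filter (fun j => (univ.filter (fun i => z i < z j)).card ≤ k - 1) with hT
  by_cases hc : Tᶜ = (∅ : Finset (Fin N))
  · have : T = univ := by
      have := congrArg compl hc
      simpa using this
    rw [this, card_univ, Fintype.card_fin]; exact hk
  · obtain ⟨j0, hj0⟩ := Finset.nonempty_iff_ne_empty.mpr hc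
    obtain ⟨j1, hj1, hmin⟩ := Finset.exists_min_image Tᶜ z ⟨j0, hj0⟩
    have hj1' : ¬ ((univ.filter (fun i => z i < z j1)).card ≤ k - 1) := by
      simpa [hT] using (Finset.mem_compl.mp hj1)
    have hge : k ≤ (univ.filter (fun i => z i < z j1)).card := by omega
    have hsub : univ.filter (fun i => z i < z j1) ⊆ T := by
      intro i hi
      simp only [mem_filter, mem_univ, true_and] at hi
      by_contra hiT
      have : i ∈ Tᶜ := Finset.mem_compl.mpr hiT
      exact absurd (hmin i this) (not_le.mpr hi)
    exact le_trans hge (Finset.card_le_card hsub)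

open Finset in
open scoped Classical in
theorem stmt4 {Ω : Type*} [MeasurableSpace Ω] (μ : Measure Ω) [IsProbabilityMeasure μ]
    (n : ℕ) (Z : Fin (n + 1) → Ω → ℝ) (hZ : ∀ i, Measurable (Z i))
    (hexch : ∀ π : Equiv.Perm (Fin (n + 1)),
      Measure.map (fun ω => fun i => Z (π i) ω) μ =
        Measure.map (fun ω => fun i => Z i ω) μ)
    (α : ℝ) (hα : α ∈ Set.Ico (1 / (n + 1) : ℝ) 1) :
    ENNReal.ofReal (1 - α) ≤
      μ {ω | (Z (Fin.last n) ω : EReal) ≤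
        empQuantile n (fun i : Fin n => Z i.castSucc ω) α} := by
  obtain ⟨hα1, hα2⟩ := hα
  set k := ⌈(1 - α) * ((n:ℝ) + 1)⌉₊ with hkdef
  have hnpos : (0:ℝ) < (n:ℝ) + 1 := by positivity
  have hk1 : 1 ≤ k := by
    rw [hkdef]
    exact Nat.one_le_iff_ne_zero.mpr (Nat.pos_iff_ne_zero.mp
      (Nat.ceil_pos.mpr (by nlinarith)))
  have h1a : 1 ≤ α * ((n:ℝ)+1) := by
    rw [div_le_iff₀ hnpos] at hα1; linarith
  have hkn : k ≤ n := by
    rw [hkdef]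
    apply Nat.ceil_le.mpr
    nlinarith
  have hkN : k ≤ n + 1 := by omega
  -- the vector of scores
  have hmeas1 : Measurable (fun ω => fun i : Fin (n+1) => Z i ω) :=
    measurable_pi_lambda _ hZ
  set S : Fin (n+1) → Set (Fin (n+1) → ℝ) :=
    fun j => {z | (univ.filter (fun i => z i < z j)).card ≤ k - 1} with hSdef
  have hSmeas : ∀ j, MeasurableSet (S j) := by
    intro j
    have hg : Measurable (fun z : Fin (n+1) → ℝ => (univ.filter (fun i => z i < z j)).card) := by
      simp only [Finset.card_filter]
      exact Finset.measurable_sum _ (fun i _ =>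
        Measurable.ite (measurableSet_lt (measurable_pi_apply i) (measurable_pi_apply j))
          measurable_const measurable_const)
    exact hg (MeasurableSet.of_discrete (s := {m : ℕ | m ≤ k - 1}))
  set A : Fin (n+1) → Set Ω := fun j => (fun ω i => Z i ω) ⁻¹' S j with hAdef
  have hAmeas : ∀ j, MeasurableSet (A j) := fun j => hmeas1 (hSmeas j)
  -- all A j have the same probability
  have heq : ∀ j, μ (A j) = μ (A (Fin.last n)) := by
    intro j
    set π : Equiv.Perm (Fin (n+1)) := Equiv.swap (Fin.last n) j with hπ
    have hmeas2 : Measurable (fun ω => fun i => Z (π i) ω) :=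
      measurable_pi_lambda _ (fun i => hZ _)
    have h1 : μ ((fun ω => fun i => Z (π i) ω) ⁻¹' S (Fin.last n))
        = μ ((fun ω i => Z i ω) ⁻¹' S (Fin.last n)) := by
      rw [← Measure.map_apply hmeas2 (hSmeas _), ← Measure.map_apply hmeas1 (hSmeas _), hexch π]
    have h2 : (fun ω => fun i => Z (π i) ω) ⁻¹' S (Fin.last n)
        = (fun ω i => Z i ω) ⁻¹' S j := by
      ext ω
      simp only [Set.mem_preimage, hSdef, Set.mem_setOf_eq]
      have hlast : π (Fin.last n) = j := Equiv.swap_apply_left _ _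
      have hcardeq : (univ.filter (fun i => Z (π i) ω < Z (π (Fin.last n)) ω)).card
          = (univ.filter (fun i => Z i ω < Z (π (Fin.last n)) ω)).card := by
        apply Finset.card_bij (fun i _ => π i)
        · intro a ha
          simp only [mem_filter, mem_univ, true_and] at ha ⊢
          exact ha
        · intro a _ b _ h
          exact π.injective h
        · intro b hb
          refine ⟨π.symm b, ?_, by simp⟩
          simp only [mem_filter, mem_univ, true_and, Equiv.apply_symm_apply] at hb ⊢
          exact hb
      rw [hcardeq, hlast]
    rw [hAdef]
    dsimp only
    rw [← h2, h1]
  -- pointwise counting bound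
  have hpt : ∀ ω, k ≤ (univ.filter (fun j => ω ∈ A j)).card := by
    intro ω
    have := rank_count_lemma (n+1) k hkN (fun i => Z i ω)
    convert this using 2
    apply Finset.filter_congr
    intro j _
    simp [hAdef, hSdef]
  -- sum of measures is at least k
  have hsum : (k : ENNReal) ≤ ∑ j, μ (A j) := by
    have h1 : ∀ j : Fin (n+1), μ (A j) = ∫⁻ ω, (A j).indicator 1 ω ∂μ :=
      fun j => (lintegral_indicator_one (hAmeas j)).symm
    simp_rw [h1]
    rw [← lintegral_finset_sum _ (fun j _ => measurable_one.indicator (hAmeas j))]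
    have h2 : (k : ENNReal) = ∫⁻ _, (k : ENNReal) ∂μ := by simp
    rw [h2]
    apply lintegral_mono
    intro ω
    dsimp only
    have : ∑ j, (A j).indicator (1 : Ω → ENNReal) ω
        = ((univ.filter (fun j => ω ∈ A j)).card : ENNReal) := by
      rw [← Finset.sum_boole]
      apply Finset.sum_congr rfl
      intro j _
      simp [Set.indicator_apply]
    rw [this]
    exact_mod_cast hpt ω
  -- hence μ (A last) ≥ k / (n+1)
  have hconst : ∑ j : Fin (n+1), μ (A j) = ((n:ENNReal)+1) * μ (A (Fin.last n)) := by
    calc ∑ j : Fin (n+1), μ (A j) = ∑ _j : Fin (n+1), μ (A (Fin.last n)) :=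
          Finset.sum_congr rfl (fun j _ => heq j)
      _ = ((n:ENNReal)+1) * μ (A (Fin.last n)) := by
          rw [Finset.sum_const, Finset.card_univ, Fintype.card_fin, nsmul_eq_mul]
          norm_num
  have hp : (k : ENNReal) ≤ ((n:ENNReal)+1) * μ (A (Fin.last n)) := by
    rw [← hconst]; exact hsum
  -- identify the event
  have hevent : {ω | (Z (Fin.last n) ω : EReal) ≤
      empQuantile n (fun i : Fin n => Z i.castSucc ω) α} = A (Fin.last n) := by
    ext ω
    rw [hAdef]
    simp only [Set.mem_setOf_eq, Set.mem_preimage, hSdef]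
    rw [empQuantile]
    have hk' : ⌈(1 - α) * ((n:ℝ) + 1)⌉₊ = k := by rw [hkdef]
    rw [show ((n:ℝ) + 1) = ((n:ℝ) + 1) from rfl] at hk'
    rw [hk']
    rw [le_empQuantile_iff n k hk1 hkN (fun i => Z i.castSucc ω) (Z (Fin.last n) ω)]
    have hsplit : (univ.filter (fun i : Fin (n+1) => Z i ω < Z (Fin.last n) ω)).card
        = (univ.filter (fun i : Fin n => Z i.castSucc ω < Z (Fin.last n) ω)).card := by
      rw [Finset.card_filter, Finset.card_filter, Fin.sum_univ_castSucc]
      simp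
    rw [hsplit]
  rw [hevent]
  -- final arithmetic
  have hle : (1 - α) ≤ (k : ℝ) / ((n:ℝ)+1) := by
    rw [le_div_iff₀ hnpos]
    calc (1-α) * ((n:ℝ)+1) ≤ (⌈(1 - α) * ((n:ℝ) + 1)⌉₊ : ℝ) := Nat.le_ceil _
      _ = (k:ℝ) := by rw [hkdef]
  calc ENNReal.ofReal (1 - α) ≤ ENNReal.ofReal ((k:ℝ) / ((n:ℝ)+1)) :=
        ENNReal.ofReal_le_ofReal hle
    _ = (k : ENNReal) / ((n:ENNReal)+1) := by
        rw [ENNReal.ofReal_div_of_pos hnpos]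
        congr 1
        · exact ENNReal.ofReal_natCast k
        · rw [ENNReal.ofReal_add (by positivity) zero_le_one]
          simp [ENNReal.ofReal_natCast]
    _ ≤ μ (A (Fin.last n)) := by
        rw [ENNReal.div_le_iff_le_mul (by simp) (by simp)]
        rw [mul_comm]
        exact hp
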